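/- Let N = n²M where n is a positive divisor of 24 and M is a squarefree positive integer. Then the number of pairs (m,k) with m a positive divisor of N and 0 ≤ k ≤ φ(h(m))−1 equals the number of cusps of X_0(N); that is, ∑_{m|N} φ(h(m)) = ∑_{d|N} φ(gcd(d, N/d)). Moreover, both sides equal ∑_{h|n} φ(h)·2^{ω(N/h²)}, where ω(k) denotes the number of distinct prime factors of k. -/

import Mathlib

open Finset

/-- square part: largest `h` with `h² ∣ k` (for `k ≠ 0`). -/
def spart (k : ℕ) : ℕ := ∏ p ∈ k.primeFactors, p ^ (k.factorization p / 2)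

lemma spart_ne_zero (k : ℕ) : spart k ≠ 0 := by
  refine Finset.prod_ne_zero_iff.2 fun p hp => ?_
  exact pow_ne_zero _ (Nat.prime_of_mem_primeFactors hp).ne_zero

lemma spart_one : spart 1 = 1 := by simp [spart]

lemma prod_primeFactors_pow_eq_self {k : ℕ} (hk : k ≠ 0) :
    ∏ p ∈ k.primeFactors, p ^ k.factorization p = k := by
  have := Nat.factorization_prod_pow_eq_self hk
  rwa [Finsupp.prod, Nat.support_factorization] at this

lemma spart_sq_dvd {k : ℕ} (hk : k ≠ 0) : spart k ^ 2 ∣ k := by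
  conv_rhs => rw [← prod_primeFactors_pow_eq_self hk]
  rw [spart, ← Finset.prod_pow]
  refine Finset.prod_dvd_prod_of_dvd _ _ fun p hp => ?_
  rw [← pow_mul]
  exact pow_dvd_pow p (by omega)

lemma spart_dvd {k : ℕ} (hk : k ≠ 0) : spart k ∣ k :=
  (dvd_pow_self (spart k) two_ne_zero).trans (spart_sq_dvd hk)

lemma factorization_spart {k : ℕ} (hk : k ≠ 0) (q : ℕ) :
    (spart k).factorization q = k.factorization q / 2 := by
  rw [spart, Nat.factorization_prod
    (fun p hp => pow_ne_zero _ (Nat.prime_of_mem_primeFactors hp).ne_zero)]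
  rw [Finset.sum_apply']
  have : ∀ p ∈ k.primeFactors, (p ^ (k.factorization p / 2)).factorization q
      = if p = q then k.factorization p / 2 else 0 := by
    intro p hp
    rw [(Nat.prime_of_mem_primeFactors hp).factorization_pow, Finsupp.single_apply]
  rw [Finset.sum_congr rfl this, Finset.sum_ite_eq']
  by_cases hq : q ∈ k.primeFactors
  · simp [hq]
  · rw [if_neg hq]
    have : k.factorization q = 0 := by
      rw [← Finsupp.notMem_support_iff, Nat.support_factorization]
      exact hq
    omega

lemma dvd_spart_iff {k : ℕ} (hk : k ≠ 0) (h : ℕ) : h ∣ spart k ↔ h ^ 2 ∣ k := by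
  constructor
  · intro hd
    exact (pow_dvd_pow_of_dvd hd 2).trans (spart_sq_dvd hk)
  · intro hd
    have hh0 : h ≠ 0 := by
      rintro rfl
      rw [zero_pow two_ne_zero] at hd
      exact hk (zero_dvd_iff.mp hd)
    rw [← Nat.factorization_le_iff_dvd hh0 (spart_ne_zero k)]
    rw [← Nat.factorization_le_iff_dvd (pow_ne_zero _ hh0) hk] at hd
    rw [Finsupp.le_def] at hd ⊢
    intro q
    have := hd q
    rw [Nat.factorization_pow, Finsupp.smul_apply, smul_eq_mul] at this
    rw [factorization_spart hk]
    omega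

lemma spart_mul {a b : ℕ} (ha : a ≠ 0) (hb : b ≠ 0) (hab : a.Coprime b) :
    spart (a * b) = spart a * spart b := by
  refine Nat.eq_of_factorization_eq (spart_ne_zero _) (mul_ne_zero (spart_ne_zero _) (spart_ne_zero _))
    fun q => ?_
  rw [factorization_spart (mul_ne_zero ha hb), Nat.factorization_mul ha hb,
    Nat.factorization_mul (spart_ne_zero a) (spart_ne_zero b)]
  rw [Finsupp.add_apply, Finsupp.add_apply, factorization_spart ha, factorization_spart hb]
  have : a.factorization q = 0 ∨ b.factorization q = 0 := by
    by_contra hcon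
    push_neg at hcon
    have hqa : q ∈ a.primeFactors := by
      rw [← Nat.support_factorization, Finsupp.mem_support_iff]; exact hcon.1
    have hqb : q ∈ b.primeFactors := by
      rw [← Nat.support_factorization, Finsupp.mem_support_iff]; exact hcon.2
    exact (Finset.disjoint_left.1 hab.disjoint_primeFactors) hqa hqb
  omega

lemma spart_prime_pow {p : ℕ} (hp : p.Prime) (k : ℕ) : spart (p ^ k) = p ^ (k / 2) := by
  rcases Nat.eq_zero_or_pos k with rfl | hk
  · simpa using spart_one
  · rw [spart, Nat.primeFactors_prime_pow hk.ne' hp, Finset.prod_singleton,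
      hp.factorization_pow, Finsupp.single_apply, if_pos rfl]

/-- `hh N m` is the largest positive integer `h` with `m·h² ∣ N` (for `m ∣ N`, `N > 0`). -/
def hh (N m : ℕ) : ℕ := Nat.findGreatest (fun h => m * h ^ 2 ∣ N) N

lemma hh_eq {N m : ℕ} (hN : N ≠ 0) (hm : m ∣ N) : hh N m = spart (N / m) := by
  have hm0 : m ≠ 0 := by rintro rfl; exact hN (zero_dvd_iff.mp hm)
  have hq0 : N / m ≠ 0 := by
    have := Nat.div_mul_cancel hm
    intro h0; rw [h0, zero_mul] at this; exact hN this.symm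
  rw [hh, Nat.findGreatest_eq_iff]
  have key : ∀ h : ℕ, (m * h ^ 2 ∣ N) ↔ h ∣ spart (N / m) := by
    intro h
    rw [dvd_spart_iff hq0, Nat.dvd_div_iff_mul_dvd hm]
  refine ⟨?_, fun _ => ?_, fun n hn hn' hP => ?_⟩
  · exact le_trans (Nat.le_of_dvd (Nat.pos_of_ne_zero hq0) (spart_dvd hq0))
      (Nat.div_le_self N m)
  · exact (key _).2 dvd_rfl
  · have := Nat.le_of_dvd (Nat.pos_of_ne_zero (spart_ne_zero _)) ((key n).1 hP)
    omega

lemma gcd_mul_coprime {m n : ℕ} (h : m.Coprime n) (d : ℕ) :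
    Nat.gcd d (m * n) = Nat.gcd d m * Nat.gcd d n := by
  refine Nat.dvd_antisymm (gcd_mul_dvd_mul_gcd d m n) ?_
  have hc : (Nat.gcd d m).Coprime (Nat.gcd d n) :=
    Nat.Coprime.coprime_dvd_left (Nat.gcd_dvd_right d m)
      (Nat.Coprime.coprime_dvd_right (Nat.gcd_dvd_right d n) h)
  exact hc.mul_dvd_of_dvd_of_dvd
    (Nat.dvd_gcd (Nat.gcd_dvd_left d m) ((Nat.gcd_dvd_right d m).trans (dvd_mul_right m n)))
    (Nat.dvd_gcd (Nat.gcd_dvd_left d n) ((Nat.gcd_dvd_right d n).trans (dvd_mul_left n m)))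

lemma sum_divisors_coprime_mul {m n : ℕ} (hm : m ≠ 0) (hn : n ≠ 0) (h : m.Coprime n)
    (f : ℕ → ℕ) :
    ∑ d ∈ (m * n).divisors, f d = ∑ a ∈ m.divisors, ∑ b ∈ n.divisors, f (a * b) := by
  rw [← Finset.sum_product']
  have hgcd : ∀ a ∈ m.divisors, ∀ b ∈ n.divisors,
      Nat.gcd (a * b) m = a ∧ Nat.gcd (a * b) n = b := by
    intro a ha b hb
    rw [Nat.mem_divisors] at ha hb
    constructor
    · rw [Nat.Coprime.gcd_mul_right_cancel a
        (Nat.Coprime.coprime_dvd_left hb.1 h.symm), Nat.gcd_eq_left ha.1]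
    · rw [Nat.Coprime.gcd_mul_left_cancel b
        (Nat.Coprime.coprime_dvd_left ha.1 h), Nat.gcd_eq_left hb.1]
  refine Finset.sum_nbij' (i := fun d => (Nat.gcd d m, Nat.gcd d n))
    (j := fun p => p.1 * p.2) ?_ ?_ ?_ ?_ ?_
  · intro d hd
    rw [Nat.mem_divisors] at hd
    rw [Finset.mem_product, Nat.mem_divisors, Nat.mem_divisors]
    exact ⟨⟨Nat.gcd_dvd_right d m, hm⟩, ⟨Nat.gcd_dvd_right d n, hn⟩⟩
  · intro p hp
    rw [Finset.mem_product, Nat.mem_divisors, Nat.mem_divisors] at hp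
    exact Nat.mem_divisors.2 ⟨mul_dvd_mul hp.1.1 hp.2.1, mul_ne_zero hm hn⟩
  · intro d hd
    rw [Nat.mem_divisors] at hd
    simp only []
    rw [← gcd_mul_coprime h d, Nat.gcd_eq_left hd.1]
  · intro p hp
    rw [Finset.mem_product] at hp
    have := hgcd _ hp.1 _ hp.2
    exact Prod.ext this.1 this.2
  · intro d hd
    rw [Nat.mem_divisors] at hd
    simp only []
    rw [← gcd_mul_coprime h d, Nat.gcd_eq_left hd.1]

open ArithmeticFunction

/-- φ(spart k) as an arithmetic function -/
def f1 : ArithmeticFunction ℕ :=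
  ⟨fun k => if k = 0 then 0 else (spart k).totient, by simp⟩

lemma f1_apply {k : ℕ} (hk : k ≠ 0) : f1 k = (spart k).totient := if_neg hk

lemma f1_mult : f1.IsMultiplicative := by
  rw [ArithmeticFunction.IsMultiplicative.iff_ne_zero]
  refine ⟨by simp [f1_apply one_ne_zero, spart_one], fun {m n} hm hn h => ?_⟩
  rw [f1_apply (mul_ne_zero hm hn), f1_apply hm, f1_apply hn, spart_mul hm hn h]
  exact Nat.totient_mul (Nat.Coprime.coprime_dvd_left (spart_dvd hm)
    (Nat.Coprime.coprime_dvd_right (spart_dvd hn) h))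

def Gf : ArithmeticFunction ℕ :=
  ⟨fun k => ∑ d ∈ k.divisors, Nat.totient (Nat.gcd d (k / d)), by simp⟩

lemma Gf_apply (k : ℕ) : Gf k = ∑ d ∈ k.divisors, Nat.totient (Nat.gcd d (k / d)) := rfl

lemma Gf_mult : Gf.IsMultiplicative := by
  rw [ArithmeticFunction.IsMultiplicative.iff_ne_zero]
  refine ⟨by simp [Gf_apply], fun {m n} hm hn h => ?_⟩
  rw [Gf_apply, Gf_apply, Gf_apply, sum_divisors_coprime_mul hm hn h, Finset.sum_mul_sum]
  refine Finset.sum_congr rfl fun a ha => Finset.sum_congr rfl fun b hb => ?_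
  rw [Nat.mem_divisors] at ha hb
  have hma : m / a ∣ m := Nat.div_dvd_of_dvd ha.1
  have hnb : n / b ∣ n := Nat.div_dvd_of_dvd hb.1
  have h1 : m * n / (a * b) = m / a * (n / b) := by
    rw [Nat.div_mul_div_comm ha.1 hb.1]
  rw [h1, gcd_mul_coprime (Nat.Coprime.coprime_dvd_left hma
      (Nat.Coprime.coprime_dvd_right hnb h))]
  have h2 : (a * b).gcd (m / a) = a.gcd (m / a) :=
    Nat.Coprime.gcd_mul_right_cancel a
      (Nat.Coprime.coprime_dvd_left hb.1 (Nat.Coprime.coprime_dvd_right hma h.symm))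
  have h3 : (a * b).gcd (n / b) = b.gcd (n / b) :=
    Nat.Coprime.gcd_mul_left_cancel b
      (Nat.Coprime.coprime_dvd_left ha.1 (Nat.Coprime.coprime_dvd_right hnb h))
  rw [h2, h3]
  exact Nat.totient_mul (Nat.Coprime.coprime_dvd_left ((Nat.gcd_dvd_left _ _).trans ha.1)
    (Nat.Coprime.coprime_dvd_right ((Nat.gcd_dvd_left _ _).trans hb.1) h))

def Tf : ArithmeticFunction ℕ :=
  ⟨fun k => if k = 0 then 0 else
    ∑ h ∈ (spart k).divisors, h.totient * 2 ^ (k / h ^ 2).primeFactors.card, by simp⟩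

lemma Tf_apply {k : ℕ} (hk : k ≠ 0) :
    Tf k = ∑ h ∈ (spart k).divisors, h.totient * 2 ^ (k / h ^ 2).primeFactors.card := if_neg hk

lemma Tf_mult : Tf.IsMultiplicative := by
  rw [ArithmeticFunction.IsMultiplicative.iff_ne_zero]
  refine ⟨by simp [Tf_apply one_ne_zero, spart_one], fun {m n} hm hn h => ?_⟩
  rw [Tf_apply (mul_ne_zero hm hn), Tf_apply hm, Tf_apply hn, spart_mul hm hn h,
    sum_divisors_coprime_mul (spart_ne_zero m) (spart_ne_zero n)
      (Nat.Coprime.coprime_dvd_left (spart_dvd hm)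
        (Nat.Coprime.coprime_dvd_right (spart_dvd hn) h)),
    Finset.sum_mul_sum]
  refine Finset.sum_congr rfl fun a ha => Finset.sum_congr rfl fun b hb => ?_
  rw [Nat.mem_divisors] at ha hb
  have ha2 : a ^ 2 ∣ m := (dvd_spart_iff hm a).1 ha.1
  have hb2 : b ^ 2 ∣ n := (dvd_spart_iff hn b).1 hb.1
  have ha0 : m / a ^ 2 ≠ 0 := by
    intro h0
    exact hm (by simpa [h0] using (Nat.div_mul_cancel ha2).symm)
  have hb0 : n / b ^ 2 ≠ 0 := by
    intro h0
    exact hn (by simpa [h0] using (Nat.div_mul_cancel hb2).symm)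
  have h1 : m * n / (a * b) ^ 2 = m / a ^ 2 * (n / b ^ 2) := by
    rw [mul_pow, Nat.div_mul_div_comm ha2 hb2]
  have hcop : (m / a ^ 2).Coprime (n / b ^ 2) :=
    Nat.Coprime.coprime_dvd_left (Nat.div_dvd_of_dvd ha2)
      (Nat.Coprime.coprime_dvd_right (Nat.div_dvd_of_dvd hb2) h)
  have hcopab : a.Coprime b :=
    Nat.Coprime.coprime_dvd_left ((dvd_pow_self a two_ne_zero).trans ha2)
      (Nat.Coprime.coprime_dvd_right ((dvd_pow_self b two_ne_zero).trans hb2) h)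
  rw [h1, Nat.primeFactors_mul ha0 hb0,
    Finset.card_union_of_disjoint hcop.disjoint_primeFactors, pow_add,
    Nat.totient_mul hcopab]
  ring

lemma Ff_apply {k : ℕ} (hk : k ≠ 0) :
    (ArithmeticFunction.zeta * f1) k = ∑ d ∈ k.divisors, (spart d).totient := by
  rw [ArithmeticFunction.zeta_mul_apply]
  exact Finset.sum_congr rfl fun d hd => f1_apply (Nat.pos_of_mem_divisors hd).ne'

lemma Fpp {p : ℕ} (hp : p.Prime) (k : ℕ) :
    (ArithmeticFunction.zeta * f1) (p ^ k) = ∑ j ∈ Finset.range (k + 1), (p ^ (j / 2)).totient := by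
  rw [Ff_apply (pow_ne_zero k hp.ne_zero), Nat.divisors_prime_pow hp, Finset.sum_map]
  exact Finset.sum_congr rfl fun j hj => by
    simp only [Function.Embedding.coeFn_mk]
    rw [spart_prime_pow hp]

lemma Gpp {p : ℕ} (hp : p.Prime) (k : ℕ) :
    Gf (p ^ k) = ∑ j ∈ Finset.range (k + 1), (p ^ min j (k - j)).totient := by
  rw [Gf_apply, Nat.divisors_prime_pow hp, Finset.sum_map]
  refine Finset.sum_congr rfl fun j hj => ?_
  rw [Finset.mem_range] at hj
  have hjk : j ≤ k := by omega
  simp only [Function.Embedding.coeFn_mk]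
  rw [Nat.pow_div hjk hp.pos]
  rcases le_total j (k - j) with hle | hle
  · rw [Nat.gcd_eq_left (pow_dvd_pow p hle), min_eq_left hle]
  · rw [Nat.gcd_eq_right (pow_dvd_pow p hle), min_eq_right hle]

lemma Tpp {p : ℕ} (hp : p.Prime) (k : ℕ) :
    Tf (p ^ k) = ∑ i ∈ Finset.range (k / 2 + 1),
      (p ^ i).totient * (if k = 2 * i then 1 else 2) := by
  rw [Tf_apply (pow_ne_zero k hp.ne_zero), spart_prime_pow hp,
    Nat.divisors_prime_pow hp, Finset.sum_map]
  refine Finset.sum_congr rfl fun i hi => ?_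
  rw [Finset.mem_range] at hi
  have h2i : 2 * i ≤ k := by omega
  simp only [Function.Embedding.coeFn_mk]
  rw [← pow_mul, mul_comm i 2, Nat.pow_div h2i hp.pos]
  congr 1
  rcases Nat.eq_zero_or_pos (k - 2 * i) with h0 | h0
  · rw [h0, pow_zero, if_pos (by omega)]
    simp
  · rw [Nat.primeFactors_prime_pow h0.ne' hp, if_neg (by omega)]
    simp

lemma idG {p : ℕ} (k : ℕ) :
    ∑ j ∈ Finset.range (k + 1), (p ^ (j / 2)).totient
      = ∑ j ∈ Finset.range (k + 1), (p ^ min j (k - j)).totient := by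
  refine Finset.sum_nbij' (i := fun j => if j % 2 = 0 then j / 2 else k - j / 2)
    (j := fun i => if 2 * i ≤ k then 2 * i else 2 * (k - i) + 1) ?_ ?_ ?_ ?_ ?_
  · intro a ha
    rw [Finset.mem_range] at ha ⊢
    split_ifs <;> omega
  · intro a ha
    rw [Finset.mem_range] at ha ⊢
    split_ifs <;> omega
  · intro a ha
    rw [Finset.mem_range] at ha
    split_ifs <;> omega
  · intro a ha
    rw [Finset.mem_range] at ha
    split_ifs <;> omega
  · intro a ha
    rw [Finset.mem_range] at ha
    have : min (if a % 2 = 0 then a / 2 else k - a / 2)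
        (k - (if a % 2 = 0 then a / 2 else k - a / 2)) = a / 2 := by
      split_ifs <;> omega
    rw [this]

lemma idT {p : ℕ} (k : ℕ) :
    ∑ i ∈ Finset.range (k / 2 + 1), (p ^ i).totient * (if k = 2 * i then 1 else 2)
      = ∑ j ∈ Finset.range (k + 1), (p ^ (j / 2)).totient := by
  induction k with
  | zero => simp
  | succ k ih =>
    rw [Finset.sum_range_succ (f := fun j => (p ^ (j / 2)).totient), ← ih]
    rcases Nat.even_or_odd k with ⟨t, ht⟩ | ⟨t, ht⟩
    · have h2 : (k + 1) / 2 = k / 2 := by omega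
      have hkt : k / 2 = t := by omega
      rw [h2, Finset.sum_range_succ, Finset.sum_range_succ]
      have hcongr : ∀ i ∈ Finset.range (k / 2),
          (p ^ i).totient * (if k + 1 = 2 * i then 1 else 2)
            = (p ^ i).totient * (if k = 2 * i then 1 else 2) := by
        intro i hi
        rw [Finset.mem_range] at hi
        rw [if_neg (by omega), if_neg (by omega)]
      rw [Finset.sum_congr rfl hcongr, if_neg (by omega), if_pos (by omega), hkt]
      ring
    · have h2 : (k + 1) / 2 = k / 2 + 1 := by omega
      rw [h2, Finset.sum_range_succ]
      have hcongr : ∀ i ∈ Finset.range (k / 2 + 1),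
          (p ^ i).totient * (if k + 1 = 2 * i then 1 else 2)
            = (p ^ i).totient * (if k = 2 * i then 1 else 2) := by
        intro i hi
        rw [Finset.mem_range] at hi
        rw [if_neg (by omega), if_neg (by omega)]
      rw [Finset.sum_congr rfl hcongr, if_pos (by omega)]
      ring

lemma F_eq_G : (ArithmeticFunction.zeta * f1) = Gf := by
  rw [ArithmeticFunction.IsMultiplicative.eq_iff_eq_on_prime_powers _
    (ArithmeticFunction.isMultiplicative_zeta.mul f1_mult) _ Gf_mult]
  intro p i hp
  rw [Fpp hp, Gpp hp, idG]

lemma F_eq_T : (ArithmeticFunction.zeta * f1) = Tf := by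
  rw [ArithmeticFunction.IsMultiplicative.eq_iff_eq_on_prime_powers _
    (ArithmeticFunction.isMultiplicative_zeta.mul f1_mult) _ Tf_mult]
  intro p i hp
  rw [Fpp hp, Tpp hp, idT]

lemma spart_eq {n M : ℕ} (hn : n ≠ 0) (hM : Squarefree M) :
    spart (n ^ 2 * M) = n := by
  have hM0 : M ≠ 0 := hM.ne_zero
  have hN0 : n ^ 2 * M ≠ 0 := mul_ne_zero (pow_ne_zero 2 hn) hM0
  refine Nat.dvd_antisymm ?_ ((dvd_spart_iff hN0 n).2 (dvd_mul_right _ _))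
  have h2 : spart (n ^ 2 * M) ^ 2 ∣ n ^ 2 * M := spart_sq_dvd hN0
  rw [← Nat.factorization_le_iff_dvd (spart_ne_zero _) hn, Finsupp.le_def]
  intro q
  rw [← Nat.factorization_le_iff_dvd (pow_ne_zero _ (spart_ne_zero _)) hN0,
    Finsupp.le_def] at h2
  have := h2 q
  rw [Nat.factorization_pow, Nat.factorization_mul (pow_ne_zero 2 hn) hM0,
    Nat.factorization_pow, Finsupp.add_apply, Finsupp.smul_apply, Finsupp.smul_apply,
    smul_eq_mul, smul_eq_mul] at this
  have hMq := hM.natFactorization_le_one q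
  omega

/-- Claim (a) in the proof of Theorem 2: for `N = n²M`, `n ∣ 24`, `M` squarefree, the
number of pairs `(m,k)` with `m ∣ N`, `0 ≤ k ≤ φ(h(m))−1`, equals the number of cusps
of `X₀(N)`, and both equal `∑_{h∣n} φ(h)·2^{ω(N/h²)}`. -/
theorem count_pairs_eq_count_cusps
    (n M N : ℕ) (hn : n ∣ 24) (hnpos : 0 < n) (hM : Squarefree M) (hMpos : 0 < M)
    (hN : N = n ^ 2 * M) :
    (∑ m ∈ N.divisors, Nat.totient (hh N m) =
      ∑ d ∈ N.divisors, Nat.totient (Nat.gcd d (N / d))) ∧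
    (∑ m ∈ N.divisors, Nat.totient (hh N m) =
      ∑ h ∈ n.divisors, Nat.totient h * 2 ^ (N / h ^ 2).primeFactors.card) := by
  have hN0 : N ≠ 0 := by
    rw [hN]; exact mul_ne_zero (pow_ne_zero 2 hnpos.ne') hM.ne_zero
  have hspart : spart N = n := by rw [hN]; exact spart_eq hnpos.ne' hM
  have hF : ∑ m ∈ N.divisors, Nat.totient (hh N m) = (ArithmeticFunction.zeta * f1) N := by
    rw [Ff_apply hN0]
    rw [← Nat.sum_div_divisors N (fun d => (spart d).totient)]
    exact Finset.sum_congr rfl fun m hm => by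
      rw [hh_eq hN0 (Nat.dvd_of_mem_divisors hm)]
  constructor
  · rw [hF, F_eq_G, Gf_apply]
  · rw [hF, F_eq_T, Tf_apply hN0, hspart]
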